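/- For every nonnegative integer n and every r ∈ {6, 14}, there exist integers x, y, z with z odd such that 20n + r = 5x² + 5y² + z². -/

import Mathlib

private lemma even_sq4 {x : ℤ} (h : Even x) : ∃ m : ℤ, x^2 = 4*m := by
  obtain ⟨k, rfl⟩ := h; exact ⟨k^2, by ring⟩

private lemma odd_sq4 {x : ℤ} (h : Odd x) : ∃ m : ℤ, x^2 = 4*m + 1 := by
  obtain ⟨k, rfl⟩ := h; exact ⟨k^2 + k, by ring⟩

private lemma parity3 {N A B C : ℤ} (h4 : N % 4 = 2) (h : A^2 + B^2 + C^2 = N) :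
    (Even A ∧ Odd B ∧ Odd C) ∨ (Odd A ∧ Even B ∧ Odd C) ∨ (Odd A ∧ Odd B ∧ Even C) := by
  rcases Int.even_or_odd A with hA | hA <;> rcases Int.even_or_odd B with hB | hB <;>
    rcases Int.even_or_odd C with hC | hC
  · obtain ⟨a, ha⟩ := even_sq4 hA; obtain ⟨b, hb⟩ := even_sq4 hB; obtain ⟨c, hc⟩ := even_sq4 hC
    omega
  · obtain ⟨a, ha⟩ := even_sq4 hA; obtain ⟨b, hb⟩ := even_sq4 hB; obtain ⟨c, hc⟩ := odd_sq4 hC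
    omega
  · obtain ⟨a, ha⟩ := even_sq4 hA; obtain ⟨b, hb⟩ := odd_sq4 hB; obtain ⟨c, hc⟩ := even_sq4 hC
    omega
  · exact Or.inl ⟨hA, hB, hC⟩
  · obtain ⟨a, ha⟩ := odd_sq4 hA; obtain ⟨b, hb⟩ := even_sq4 hB; obtain ⟨c, hc⟩ := even_sq4 hC
    omega
  · exact Or.inr (Or.inl ⟨hA, hB, hC⟩)
  · exact Or.inr (Or.inr ⟨hA, hB, hC⟩)
  · obtain ⟨a, ha⟩ := odd_sq4 hA; obtain ⟨b, hb⟩ := odd_sq4 hB; obtain ⟨c, hc⟩ := odd_sq4 hC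
    omega

private lemma round_div (A g : ℤ) (hg : 0 < g) : ∃ a α : ℤ, A = a*g + α ∧ 2*|α| ≤ g := by
  refine ⟨(2*A + g) / (2*g), A - ((2*A + g) / (2*g))*g, by ring, ?_⟩
  have h2g : 0 < 2*g := by omega
  have h1 := Int.emod_nonneg (2*A + g) (by omega : (2*g) ≠ 0)
  have h2 := Int.emod_lt_of_pos (2*A + g) h2g
  have h3 := Int.mul_ediv_add_emod (2*A + g) (2*g)
  rcases abs_cases (A - (2*A + g) / (2*g)*g) with ⟨he, _⟩ | ⟨he, _⟩ <;> rw [he] <;> nlinarith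

private lemma four_sq_le {x g : ℤ} (h : 2*|x| ≤ g) : 4*x^2 ≤ g^2 := by
  have h0 : (0:ℤ) ≤ 2*|x| := by positivity
  have h2 := mul_self_le_mul_self h0 h
  have h3 := sq_abs x
  nlinarith

private lemma sum_sq_zero {a b c : ℤ} (h : a^2 + b^2 + c^2 = 0) : a = 0 ∧ b = 0 ∧ c = 0 := by
  constructor
  · nlinarith [sq_nonneg a, sq_nonneg b, sq_nonneg c]
  constructor
  · nlinarith [sq_nonneg a, sq_nonneg b, sq_nonneg c]
  · nlinarith [sq_nonneg a, sq_nonneg b, sq_nonneg c]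

/-- Davenport–Cassels descent for sums of three squares. -/
private lemma dc_descent (N : ℤ) (g : ℕ) : 0 < g → ∀ A B C : ℤ, A^2 + B^2 + C^2 = N*(g:ℤ)^2 →
    ∃ x y z : ℤ, x^2 + y^2 + z^2 = N := by
  induction g using Nat.strong_induction_on with
  | _ g ih =>
    intro hg A B C hABC
    rcases eq_or_lt_of_le (Nat.one_le_iff_ne_zero.mpr (by omega) : 1 ≤ g) with h1 | h1
    · exact ⟨A, B, C, by rw [hABC, ← h1]; push_cast; ring⟩
    have hgZ : (0:ℤ) < (g:ℤ) := by exact_mod_cast hg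
    obtain ⟨a, α, haA, hα⟩ := round_div A (g:ℤ) hgZ
    obtain ⟨b, β, hb, hβ⟩ := round_div B (g:ℤ) hgZ
    obtain ⟨c, γ, hc, hγ⟩ := round_div C (g:ℤ) hgZ
    set q : ℤ := a^2 + b^2 + c^2 with hq
    set s : ℤ := a*A + b*B + c*C with hs
    set h : ℤ := N*(g:ℤ) - 2*s + q*(g:ℤ) with hh
    have hegh : α^2 + β^2 + γ^2 = (g:ℤ) * h := by
      rw [hh, hq, hs]
      have e1 : α = A - a*(g:ℤ) := by omega
      have e2 : β = B - b*(g:ℤ) := by omega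
      have e3 : γ = C - c*(g:ℤ) := by omega
      rw [e1, e2, e3]; linear_combination hABC
    have hbound : α^2 + β^2 + γ^2 < (g:ℤ)^2 := by
      have a1 := four_sq_le hα; have a2 := four_sq_le hβ; have a3 := four_sq_le hγ
      nlinarith
    have hh0 : 0 ≤ h := by
      have he : (g:ℤ)*0 ≤ (g:ℤ)*h := by rw [← hegh]; positivity
      exact le_of_mul_le_mul_left he hgZ
    have hhg : h < (g:ℤ) := by
      have he : (g:ℤ)*h < (g:ℤ)*(g:ℤ) := by rw [← hegh]; nlinarith
      exact lt_of_mul_lt_mul_left he (by positivity)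
    rcases eq_or_lt_of_le hh0 with h0 | h0
    · -- h = 0 : exact point
      have he0 : α^2 + β^2 + γ^2 = 0 := by rw [hegh, ← h0]; ring
      obtain ⟨e1, e2, e3⟩ := sum_sq_zero he0
      refine ⟨a, b, c, ?_⟩
      have hA2 : A = a*(g:ℤ) := by omega
      have hB2 : B = b*(g:ℤ) := by omega
      have hC2 : C = c*(g:ℤ) := by omega
      have hfin : (a^2+b^2+c^2) * (g:ℤ)^2 = N * (g:ℤ)^2 := by
        rw [← hABC, hA2, hB2, hC2]; ring
      exact mul_right_cancel₀ (by positivity) hfin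
    · -- descent
      have hA' : ((q-N)*A + 2*(N*(g:ℤ)-s)*a)^2 + ((q-N)*B + 2*(N*(g:ℤ)-s)*b)^2
          + ((q-N)*C + 2*(N*(g:ℤ)-s)*c)^2 = N * h^2 := by
        rw [hh]; linear_combination ((q - N)^2) * hABC
      have hhnat : ((h.toNat : ℤ)) = h := Int.toNat_of_nonneg hh0
      have hlt : h.toNat < g := by omega
      have hpos : 0 < h.toNat := by omega
      exact ih h.toNat hlt hpos _ _ _ (by rw [← hhnat] at hA'; exact hA')

private lemma zmod5_pair : ∀ u v : ZMod 5, u^2 + v^2 = 0 → v = 2*u ∨ v = -(2*u) := by decide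

private lemma zmod5_good : ∀ e o1 o2 : ZMod 5, (e^2+o1^2+o2^2 = 1 ∨ e^2+o1^2+o2^2 = 4) →
    ¬(o1 = 0 ∧ o2 = 0) → (e^2+o2^2 = 0 ∨ e^2+o1^2 = 0) := by decide

private lemma int_dvd5 {x : ℤ} : (5:ℤ) ∣ x ↔ ((x : ZMod 5) = 0) :=
  (ZMod.intCast_zmod_eq_zero_iff_dvd x 5).symm

/-- extract 5(x²+y²) from u²+v² divisible by 5 -/
private lemma pair5 {u v : ℤ} (h : (5:ℤ) ∣ u^2 + v^2) : ∃ x y : ℤ, 5*x^2 + 5*y^2 = u^2 + v^2 := by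
  have h0 : ((u:ZMod 5))^2 + (v:ZMod 5)^2 = 0 := by
    have := int_dvd5.mp h; push_cast at this; exact this
  rcases zmod5_pair _ _ h0 with hc | hc
  · have : (5:ℤ) ∣ v - 2*u := by
      rw [int_dvd5]; push_cast; rw [sub_eq_zero]; exact hc
    obtain ⟨k, hk⟩ := this
    refine ⟨u + 2*k, -k, ?_⟩
    have hv : v = 2*u + 5*k := by omega
    rw [hv]; ring
  · have : (5:ℤ) ∣ v + 2*u := by
      rw [int_dvd5]; push_cast; rw [← neg_eq_iff_eq_neg] at hc
      rw [show (v:ZMod 5) + 2*u = -(-(v:ZMod 5)) + 2*u by ring, hc]; ring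
    obtain ⟨k, hk⟩ := this
    refine ⟨u - 2*k, k, ?_⟩
    have hv : v = -(2*u) + 5*k := by omega
    rw [hv]; ring

private lemma swap5 (s : ℕ) : ∀ a b : ℤ, a.natAbs + b.natAbs ≤ s → ¬(a = 0 ∧ b = 0) →
    ∃ P Q : ℤ, P^2 + Q^2 = a^2 + b^2 ∧ ¬((5:ℤ) ∣ P ∧ (5:ℤ) ∣ Q) := by
  induction s using Nat.strong_induction_on with
  | _ s ih =>
    intro a b hs hab
    by_cases h5 : (5:ℤ) ∣ a ∧ (5:ℤ) ∣ b
    · obtain ⟨⟨a', rfl⟩, ⟨b', rfl⟩⟩ := h5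
      have hab' : ¬(a' = 0 ∧ b' = 0) := by
        intro ⟨h1, h2⟩; exact hab ⟨by rw [h1]; ring, by rw [h2]; ring⟩
      have habs : a'.natAbs + b'.natAbs < s := by
        have h1 : (5*a').natAbs = 5 * a'.natAbs := by
          rw [Int.natAbs_mul]; rfl
        have h2 : (5*b').natAbs = 5 * b'.natAbs := by
          rw [Int.natAbs_mul]; rfl
        have h3 : 1 ≤ a'.natAbs + b'.natAbs := by
          rcases not_and_or.mp hab' with h | h <;>
            (simp only [← Int.natAbs_eq_zero] at h; omega)
        omega
      obtain ⟨P', Q', hPQ, hP5⟩ := ih _ habs a' b' le_rfl hab'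
      by_cases hc1 : (5:ℤ) ∣ 3*P' + 4*Q'
      · by_cases hc2 : (5:ℤ) ∣ 3*P' - 4*Q'
        · exfalso
          have hp : (5:ℤ) ∣ 6*P' := by
            have := dvd_add hc1 hc2; rw [show 6*P' = 3*P' + 4*Q' + (3*P' - 4*Q') by ring]; exact this
          have hq : (5:ℤ) ∣ 8*Q' := by
            have := dvd_sub hc1 hc2; rw [show 8*Q' = 3*P' + 4*Q' - (3*P' - 4*Q') by ring]; exact this
          have hprime : Prime (5:ℤ) := by norm_num
          rcases hprime.dvd_mul.mp hp with h | h
          · norm_num at h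
          rcases hprime.dvd_mul.mp hq with h' | h'
          · norm_num at h'
          exact hP5 ⟨h, h'⟩
        · refine ⟨3*P' - 4*Q', 4*P' + 3*Q', by linear_combination 25*hPQ, ?_⟩
          intro ⟨hx, _⟩; exact hc2 hx
      · refine ⟨3*P' + 4*Q', 4*P' - 3*Q', by linear_combination 25*hPQ, ?_⟩
        intro ⟨hx, _⟩; exact hc1 hx
    · exact ⟨a, b, rfl, h5⟩

private lemma sq_pair_zero {z y pz : ℤ} (hp : 2 ≤ pz) (h : z^2 + pz*y^2 = 0) :
    z = 0 ∧ y = 0 := by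
  constructor <;> nlinarith [sq_nonneg z, sq_nonneg y]

private lemma prime_not_sq {p : ℕ} (hp : p.Prime) (k : ℕ) : k*k ≠ p := by
  intro h
  rcases hp.eq_one_or_self_of_dvd k ⟨k, h.symm⟩ with h1 | h1
  · rw [h1] at h; simp at h; exact hp.one_lt.ne' h.symm
  · have := hp.two_le; nlinarith
private lemma sqfree_not_sq {n : ℕ} (hsf : Squarefree n) (hn : 2 ≤ n) (k : ℕ) : k*k ≠ n := by
  intro h
  have h1 := Nat.isUnit_iff.mp (hsf k ⟨1, by omega⟩)
  rw [h1] at h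
  omega

set_option maxHeartbeats 1000000 in
private lemma lattice_rep (n₀ p : ℕ) (γ : ℤ) (hn2 : 2 ≤ n₀) (hsf : Squarefree n₀)
    (hp : p.Prime) (hpn : p > n₀) (hdvd : n₀ ∣ p + 1) (hγ : (p:ℤ) ∣ γ^2 - (n₀:ℤ)) :
    ∃ W Y Z : ℤ, W ≠ 0 ∧ (n₀:ℤ)*W^2 = Z^2 + (p:ℤ)*Y^2 := by
  haveI : NeZero n₀ := ⟨by omega⟩
  haveI : NeZero p := ⟨hp.pos.ne'⟩
  have hppos : 0 < p := hp.pos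
  set sp := Nat.sqrt p with hsp
  set sn := Nat.sqrt n₀ with hsn
  set snp := Nat.sqrt (n₀*p) with hsnp
  -- cardinality inequality
  have hsp1 : p < (sp+1)*(sp+1) := Nat.lt_succ_sqrt p
  have hsn1 : n₀ < (sn+1)*(sn+1) := Nat.lt_succ_sqrt n₀
  have hsnp1 : n₀*p < (snp+1)*(snp+1) := Nat.lt_succ_sqrt (n₀*p)
  have hcard : n₀ * p < (sp+1)*((sn+1)*(snp+1)) := by
    by_contra hcon
    push_neg at hcon
    have h1 : ((sp+1)*((sn+1)*(snp+1)))*((sp+1)*((sn+1)*(snp+1))) ≤ (n₀*p)*(n₀*p) :=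
      Nat.mul_le_mul hcon hcon
    have h2 : (p+1)*((n₀+1)*(n₀*p+1)) ≤ ((sp+1)*((sn+1)*(snp+1)))*((sp+1)*((sn+1)*(snp+1))) := by
      have e : ((sp+1)*((sn+1)*(snp+1)))*((sp+1)*((sn+1)*(snp+1)))
          = ((sp+1)*(sp+1))*(((sn+1)*(sn+1))*((snp+1)*(snp+1))) := by ring
      rw [e]
      exact Nat.mul_le_mul hsp1 (Nat.mul_le_mul hsn1 hsnp1)
    have s1 : n₀*p+1 ≤ (p+1)*(n₀+1) := by nlinarith
    have s2 : (n₀*p+1)*(n₀*p+1) ≤ ((p+1)*(n₀+1))*(n₀*p+1) := Nat.mul_le_mul_right _ s1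
    nlinarith
  -- the pigeonhole map
  set f : Fin (sp+1) × Fin (sn+1) × Fin (snp+1) → ZMod n₀ × ZMod p :=
    fun t => ( ((((t.2.2 : ℕ) : ℤ) - ((t.2.1 : ℕ) : ℤ) : ℤ) : ZMod n₀),
               ((((t.2.2 : ℕ) : ℤ) - γ * ((t.1 : ℕ) : ℤ) : ℤ) : ZMod p) ) with hf
  have hcard2 : Fintype.card (ZMod n₀ × ZMod p)
      < Fintype.card (Fin (sp+1) × Fin (sn+1) × Fin (snp+1)) := by
    simpa [Fintype.card_prod, ZMod.card] using hcard
  obtain ⟨x, y, hxy, hfeq⟩ := Fintype.exists_ne_map_eq_of_card_lt f hcard2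
  set W : ℤ := ((x.1 : ℕ) : ℤ) - ((y.1 : ℕ) : ℤ) with hW
  set Y : ℤ := ((x.2.1 : ℕ) : ℤ) - ((y.2.1 : ℕ) : ℤ) with hY
  set Z : ℤ := ((x.2.2 : ℕ) : ℤ) - ((y.2.2 : ℕ) : ℤ) with hZ
  have hfeq1 := congrArg Prod.fst hfeq
  have hfeq2 := congrArg Prod.snd hfeq
  simp only [hf] at hfeq1 hfeq2
  have hd1 : (n₀:ℤ) ∣ Z - Y := by
    have h := (ZMod.intCast_eq_intCast_iff _ _ _).mp hfeq1
    have h2 := Int.ModEq.dvd h.symm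
    convert h2 using 1; rw [hZ, hY]; ring
  have hd2 : (p:ℤ) ∣ Z - γ*W := by
    have h := (ZMod.intCast_eq_intCast_iff _ _ _).mp hfeq2
    have h2 := Int.ModEq.dvd h.symm
    convert h2 using 1; rw [hZ, hW]; ring
  -- bounds
  have hWb : W^2 ≤ (p:ℤ) - 1 := by
    have b1 : ((x.1 : ℕ) : ℤ) ≤ (sp:ℤ) := by exact_mod_cast Int.ofNat_le.mpr (Fin.is_le x.1)
    have b2 : ((y.1 : ℕ) : ℤ) ≤ (sp:ℤ) := by exact_mod_cast Int.ofNat_le.mpr (Fin.is_le y.1)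
    have b3 : (0:ℤ) ≤ ((x.1 : ℕ) : ℤ) := Int.natCast_nonneg _
    have b4 : (0:ℤ) ≤ ((y.1 : ℕ) : ℤ) := Int.natCast_nonneg _
    have hsq : W^2 ≤ (sp:ℤ)*(sp:ℤ) := by rw [hW]; nlinarith
    have hle : (sp:ℤ)*(sp:ℤ) ≤ (p:ℤ) := by exact_mod_cast Nat.sqrt_le p
    have hne : W^2 ≠ (p:ℤ) := by
      intro hcon
      apply prime_not_sq hp W.natAbs
      have := congrArg Int.natAbs hcon
      rw [show W^2 = W*W by ring, Int.natAbs_mul, Int.natAbs_natCast] at this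
      exact this
    omega
  have hYb : Y^2 ≤ (n₀:ℤ) - 1 := by
    have b1 : ((x.2.1 : ℕ) : ℤ) ≤ (sn:ℤ) := by exact_mod_cast Int.ofNat_le.mpr (Fin.is_le x.2.1)
    have b2 : ((y.2.1 : ℕ) : ℤ) ≤ (sn:ℤ) := by exact_mod_cast Int.ofNat_le.mpr (Fin.is_le y.2.1)
    have b3 : (0:ℤ) ≤ ((x.2.1 : ℕ) : ℤ) := Int.natCast_nonneg _
    have b4 : (0:ℤ) ≤ ((y.2.1 : ℕ) : ℤ) := Int.natCast_nonneg _
    have hsq : Y^2 ≤ (sn:ℤ)*(sn:ℤ) := by rw [hY]; nlinarith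
    have hle : (sn:ℤ)*(sn:ℤ) ≤ (n₀:ℤ) := by exact_mod_cast Nat.sqrt_le n₀
    have hne : Y^2 ≠ (n₀:ℤ) := by
      intro hcon
      apply sqfree_not_sq hsf hn2 Y.natAbs
      have := congrArg Int.natAbs hcon
      rw [show Y^2 = Y*Y by ring, Int.natAbs_mul, Int.natAbs_natCast] at this
      exact this
    omega
  have hnpsf : Squarefree (n₀*p) := by
    have hco : Nat.Coprime n₀ p := Nat.coprime_comm.mp ((hp.coprime_iff_not_dvd).mpr
      (fun hd => absurd (Nat.le_of_dvd (by omega) hd) (by omega)))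
    exact (Nat.squarefree_mul hco).mpr ⟨hsf, hp.squarefree⟩
  have hZb : Z^2 ≤ (n₀:ℤ)*(p:ℤ) - 1 := by
    have b1 : ((x.2.2 : ℕ) : ℤ) ≤ (snp:ℤ) := by exact_mod_cast Int.ofNat_le.mpr (Fin.is_le x.2.2)
    have b2 : ((y.2.2 : ℕ) : ℤ) ≤ (snp:ℤ) := by exact_mod_cast Int.ofNat_le.mpr (Fin.is_le y.2.2)
    have b3 : (0:ℤ) ≤ ((x.2.2 : ℕ) : ℤ) := Int.natCast_nonneg _
    have b4 : (0:ℤ) ≤ ((y.2.2 : ℕ) : ℤ) := Int.natCast_nonneg _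
    have hsq : Z^2 ≤ (snp:ℤ)*(snp:ℤ) := by rw [hZ]; nlinarith
    have hle : (snp:ℤ)*(snp:ℤ) ≤ ((n₀*p : ℕ):ℤ) := by exact_mod_cast Nat.sqrt_le (n₀*p)
    have hne : Z^2 ≠ ((n₀*p:ℕ):ℤ) := by
      intro hcon
      apply sqfree_not_sq hnpsf (by nlinarith) Z.natAbs
      have := congrArg Int.natAbs hcon
      rw [show Z^2 = Z*Z by ring, Int.natAbs_mul, Int.natAbs_natCast] at this
      exact this
    push_cast at hle hne ⊢
    omega

  have hco : Nat.Coprime n₀ p := Nat.coprime_comm.mp ((hp.coprime_iff_not_dvd).mpr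
    (fun hd => absurd (Nat.le_of_dvd (by omega) hd) (by omega)))
  have hFn : (n₀:ℤ) ∣ (n₀:ℤ)*W^2 - Z^2 - (p:ℤ)*Y^2 := by
    have e : (n₀:ℤ)*W^2 - Z^2 - (p:ℤ)*Y^2
        = (n₀:ℤ)*W^2 - (Z-Y)*(Z+Y) - (((p:ℤ)+1))*Y^2 := by ring
    rw [e]
    have d1 : (n₀:ℤ) ∣ ((p:ℤ)+1) := by exact_mod_cast Int.natCast_dvd_natCast.mpr hdvd
    exact dvd_sub (dvd_sub (Dvd.intro _ rfl) (hd1.mul_right _)) (d1.mul_right _)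
  have hFp : (p:ℤ) ∣ (n₀:ℤ)*W^2 - Z^2 - (p:ℤ)*Y^2 := by
    have e : (n₀:ℤ)*W^2 - Z^2 - (p:ℤ)*Y^2
        = ((n₀:ℤ) - γ^2)*W^2 - (Z - γ*W)*(Z + γ*W) - (p:ℤ)*Y^2 := by ring
    rw [e]
    have d1 : (p:ℤ) ∣ ((n₀:ℤ) - γ^2) := by
      rw [show (n₀:ℤ) - γ^2 = -(γ^2 - (n₀:ℤ)) by ring]
      exact dvd_neg.mpr hγ
    exact dvd_sub (dvd_sub (d1.mul_right _) (hd2.mul_right _)) (Dvd.intro _ rfl)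
  have hco' : IsCoprime (n₀:ℤ) (p:ℤ) := by
    rw [Int.isCoprime_iff_gcd_eq_one]
    simpa [Int.gcd] using hco
  obtain ⟨k, hk⟩ : ((n₀:ℤ)*(p:ℤ)) ∣ (n₀:ℤ)*W^2 - Z^2 - (p:ℤ)*Y^2 := hco'.mul_dvd hFn hFp
  have hn0Z : (2:ℤ) ≤ (n₀:ℤ) := by exact_mod_cast hn2
  have hpZ : (2:ℤ) ≤ (p:ℤ) := by exact_mod_cast hp.two_le
  have hMpos : (0:ℤ) < (n₀:ℤ)*(p:ℤ) := by positivity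
  have hkup : k < 1 := by
    have h1 : ((n₀:ℤ)*(p:ℤ))*k < ((n₀:ℤ)*(p:ℤ))*1 := by
      rw [← hk, mul_one]
      nlinarith [sq_nonneg Y, sq_nonneg Z]
    exact lt_of_mul_lt_mul_left h1 (le_of_lt hMpos)
  have hkdown : -2 < k := by
    have h1 : ((n₀:ℤ)*(p:ℤ))*(-2) < ((n₀:ℤ)*(p:ℤ))*k := by
      rw [← hk]
      nlinarith [sq_nonneg W]
    exact lt_of_mul_lt_mul_left h1 (le_of_lt hMpos)
  have hk01 : k = 0 ∨ k = -1 := by omega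
  rcases hk01 with rfl | rfl
  · -- F = 0
    have hF0 : (n₀:ℤ)*W^2 - Z^2 - (p:ℤ)*Y^2 = 0 := by rw [hk]; ring
    have hWne : W ≠ 0 := by
      intro hW0
      rw [hW0] at hF0
      obtain ⟨hZ0, hY0⟩ := sq_pair_zero hpZ (by linarith : Z^2 + (p:ℤ)*Y^2 = 0)
      apply hxy
      have e1 : x.1 = y.1 := by
        have hWW : ((x.1 : ℕ) : ℤ) = ((y.1 : ℕ) : ℤ) := by
          have := hW; rw [hW0] at this; omega
        exact Fin.ext (by exact_mod_cast hWW)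
      have e2 : x.2.1 = y.2.1 := by
        have hYY : ((x.2.1 : ℕ) : ℤ) = ((y.2.1 : ℕ) : ℤ) := by
          have := hY; rw [hY0] at this; omega
        exact Fin.ext (by exact_mod_cast hYY)
      have e3 : x.2.2 = y.2.2 := by
        have hZZ : ((x.2.2 : ℕ) : ℤ) = ((y.2.2 : ℕ) : ℤ) := by
          have := hZ; rw [hZ0] at this; omega
        exact Fin.ext (by exact_mod_cast hZZ)
      exact Prod.ext e1 (Prod.ext e2 e3)
    exact ⟨W, Y, Z, hWne, by linarith⟩
  · -- F = -n₀ p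
    have hFeq : (n₀:ℤ)*W^2 - Z^2 - (p:ℤ)*Y^2 = -((n₀:ℤ)*(p:ℤ)) := by rw [hk]; ring
    refine ⟨W^2 + (p:ℤ), Z + Y*W, Z*W - (p:ℤ)*Y, ?_, ?_⟩
    · have hpos : (0:ℤ) < W^2 + (p:ℤ) := by positivity
      exact hpos.ne'
    · linear_combination (W^2 + (p:ℤ)) * hFeq

private lemma finish5 {N E O1 O2 : ℤ} (h5 : N % 5 = 1 ∨ N % 5 = 4) (_hE : Even E)
    (h1 : Odd O1) (h2 : Odd O2) (h : E^2 + O1^2 + O2^2 = N) :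
    ∃ x y z : ℤ, Odd z ∧ N = 5*x^2 + 5*y^2 + z^2 := by
  obtain ⟨P, Q, hPQ, hP5, hPodd, hQodd⟩ : ∃ P Q : ℤ,
      P^2+Q^2 = O1^2+O2^2 ∧ ¬((5:ℤ)∣P ∧ (5:ℤ)∣Q) ∧ Odd P ∧ Odd Q := by
    by_cases hb : (5:ℤ) ∣ O1 ∧ (5:ℤ) ∣ O2
    · have hO1 : ¬(O1 = 0 ∧ O2 = 0) := by
        rintro ⟨rfl, -⟩; simp at h1
      obtain ⟨P, Q, hPQ, h5'⟩ := swap5 (O1.natAbs + O2.natAbs) O1 O2 le_rfl hO1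
      obtain ⟨m1, hm1⟩ := odd_sq4 h1
      obtain ⟨m2, hm2⟩ := odd_sq4 h2
      rcases Int.even_or_odd P with hP | hP
      · exfalso
        obtain ⟨n1, hn1⟩ := even_sq4 hP
        rcases Int.even_or_odd Q with hQ | hQ
        · obtain ⟨n2, hn2⟩ := even_sq4 hQ; omega
        · obtain ⟨n2, hn2⟩ := odd_sq4 hQ; omega
      rcases Int.even_or_odd Q with hQ | hQ
      · exfalso
        obtain ⟨n1, hn1⟩ := odd_sq4 hP
        obtain ⟨n2, hn2⟩ := even_sq4 hQ; omega
      exact ⟨P, Q, hPQ, h5', hP, hQ⟩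
    · exact ⟨O1, O2, rfl, hb, h1, h2⟩
  have hN : E^2 + P^2 + Q^2 = N := by linarith
  have h50 : (5 : ZMod 5) = 0 := by decide
  have hN5 : ((N:ℤ) : ZMod 5) = 1 ∨ ((N:ℤ) : ZMod 5) = 4 := by
    rcases h5 with h5 | h5
    · left
      obtain ⟨k, hk⟩ : ∃ k, N = 5*k + 1 := ⟨N / 5, by omega⟩
      rw [hk]; push_cast; rw [h50]; ring
    · right
      obtain ⟨k, hk⟩ : ∃ k, N = 5*k + 4 := ⟨N / 5, by omega⟩
      rw [hk]; push_cast; rw [h50]; ring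
  have eN : ((E:ℤ) : ZMod 5)^2 + ((P:ℤ) : ZMod 5)^2 + ((Q:ℤ) : ZMod 5)^2 = ((N:ℤ) : ZMod 5) := by
    have : ((E^2+P^2+Q^2 : ℤ) : ZMod 5) = ((N:ℤ) : ZMod 5) := by rw [hN]
    push_cast at this; exact this
  have hPQ0 : ¬(((P:ℤ) : ZMod 5) = 0 ∧ ((Q:ℤ) : ZMod 5) = 0) := by
    rintro ⟨hp, hq⟩; exact hP5 ⟨int_dvd5.mpr hp, int_dvd5.mpr hq⟩
  rcases zmod5_good _ _ _ (by rw [eN]; exact hN5) hPQ0 with hg | hg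
  · have : (5:ℤ) ∣ E^2 + Q^2 := by
      rw [int_dvd5]; push_cast; exact hg
    obtain ⟨x, y, hxy⟩ := pair5 this
    exact ⟨x, y, P, hPodd, by linarith⟩
  · have : (5:ℤ) ∣ E^2 + P^2 := by
      rw [int_dvd5]; push_cast; exact hg
    obtain ⟨x, y, hxy⟩ := pair5 this
    exact ⟨x, y, Q, hQodd, by linarith⟩

open jacobiSym ZMod in
private lemma aux_prime (m₀ : ℕ) (hm2 : m₀ % 2 = 1) (bound : ℕ) :
    ∃ p : ℕ, p.Prime ∧ p > bound ∧ p > 2*m₀ ∧ p % 4 = 1 ∧ m₀ ∣ p + 1 ∧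
      IsSquare ((2*m₀ : ℕ) : ZMod p) := by
  have hm0 : 0 < m₀ := by omega
  have hco : Nat.Coprime 8 m₀ := by
    have h2 : Nat.Coprime 2 m₀ := Nat.coprime_two_left.mpr (Nat.odd_iff.mpr hm2)
    exact Nat.Coprime.pow_left 3 h2
  set c8 : ℕ := if m₀ % 4 = 1 then 1 else 5 with hc8
  have hc8lt : c8 = 1 ∨ c8 = 5 := by
    rcases Nat.decEq (m₀ % 4) 1 with h | h <;> simp [hc8, h]
  obtain ⟨k, hk8, hkm⟩ := Nat.chineseRemainder hco c8 (m₀ - 1)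
  have hk8' : k % 8 = c8 := by
    have h1 : k % 8 = c8 % 8 := hk8
    omega
  have hkm' : k % m₀ = m₀ - 1 := by
    have h1 : k % m₀ = (m₀ - 1) % m₀ := hkm
    have h2 : (m₀ - 1) % m₀ = m₀ - 1 := Nat.mod_eq_of_lt (by omega)
    omega
  have hkm1 : m₀ ∣ k + 1 := by
    have h1 := Nat.div_add_mod k m₀
    have h2 : m₀ * (k / m₀ + 1) = m₀ * (k / m₀) + m₀ := by ring
    exact ⟨k / m₀ + 1, by omega⟩
  haveI : NeZero (8 * m₀) := ⟨by positivity⟩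
  have hku : IsUnit ((k : ZMod (8*m₀))) := by
    rw [ZMod.isUnit_iff_coprime, Nat.coprime_mul_iff_right]
    constructor
    · have hkodd : Nat.Coprime k 2 :=
        Nat.coprime_two_right.mpr (Nat.odd_iff.mpr (by omega))
      exact Nat.Coprime.pow_right 3 hkodd
    · have h1 : Nat.gcd k m₀ ∣ 1 := by
        have ha : Nat.gcd k m₀ ∣ k + 1 := dvd_trans (Nat.gcd_dvd_right k m₀) hkm1
        have hb : Nat.gcd k m₀ ∣ k := Nat.gcd_dvd_left k m₀
        have := Nat.dvd_sub ha hb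
        simpa using this
      exact Nat.dvd_one.mp h1
  obtain ⟨p, hpb, hp, hpk⟩ :=
    Nat.forall_exists_prime_gt_and_eq_mod hku (max bound (8*m₀ + 2*m₀ + 2))
  -- transfer congruences to p
  have hpmod : p ≡ k [MOD 8*m₀] := (ZMod.natCast_eq_natCast_iff p k (8*m₀)).mp hpk
  have hp8 : p % 8 = c8 := by
    have h := (Nat.ModEq.of_dvd ⟨m₀, rfl⟩ hpmod : p ≡ k [MOD 8])
    have : p % 8 = k % 8 := h
    omega
  have hpm : p % m₀ = m₀ - 1 := by
    have h := (Nat.ModEq.of_dvd ⟨8, by ring⟩ hpmod : p ≡ k [MOD m₀])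
    have h2 : p % m₀ = k % m₀ := h
    omega
  have hpm1 : m₀ ∣ p + 1 := by
    have h1 := Nat.div_add_mod p m₀
    have h2 : m₀ * (p / m₀ + 1) = m₀ * (p / m₀) + m₀ := by ring
    exact ⟨p / m₀ + 1, by omega⟩
  have hp4 : p % 4 = 1 := by omega
  have hpodd : Odd p := Nat.odd_iff.mpr (by omega)
  have hmodd : Odd m₀ := Nat.odd_iff.mpr hm2
  have hpgt : p > 2*m₀ := by omega
  haveI hpf : Fact p.Prime := ⟨hp⟩
  refine ⟨p, hp, by omega, hpgt, hp4, hpm1, ?_⟩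
  -- Jacobi symbol computation
  have hJm : jacobiSym (m₀ : ℤ) p = jacobiSym ((p:ℕ) : ℤ) m₀ :=
    (jacobiSym.quadratic_reciprocity_one_mod_four hp4 hmodd).symm
  have hJp : jacobiSym ((p:ℕ) : ℤ) m₀ = jacobiSym (-1 : ℤ) m₀ := by
    apply jacobiSym.mod_left'
    have hdvd : (m₀:ℤ) ∣ (-1 - (p:ℤ)) := by
      have h1 : (m₀:ℤ) ∣ ((p + 1 : ℕ) : ℤ) := Int.natCast_dvd_natCast.mpr hpm1
      push_cast at h1
      have h2 : (-1 - (p:ℤ)) = -((p:ℤ) + 1) := by ring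
      rw [h2]
      exact dvd_neg.mpr h1
    exact Int.modEq_iff_dvd.mpr hdvd
  have hJneg : jacobiSym (-1 : ℤ) m₀ = ZMod.χ₄ m₀ := jacobiSym.at_neg_one hmodd
  have hJ2 : jacobiSym (2 : ℤ) p = ZMod.χ₈ p := jacobiSym.at_two hpodd
  have hLeg : legendreSym p ((2*m₀ : ℕ) : ℤ) = 1 := by
    rw [legendreSym.to_jacobiSym]
    have : ((2*m₀ : ℕ) : ℤ) = (2 : ℤ) * (m₀ : ℤ) := by push_cast; ring
    rw [this, jacobiSym.mul_left, hJ2, hJm, hJp, hJneg]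
    rcases Nat.decEq (m₀ % 4) 1 with h | h
    · -- m₀ % 4 = 3, c8 = 5
      have hm4 : m₀ % 4 = 3 := by omega
      have hc : c8 = 5 := by simp [hc8, h]
      rw [ZMod.χ₈_nat_eq_if_mod_eight, ZMod.χ₄_nat_eq_if_mod_four]
      rw [hc] at hp8
      simp [hp8, hm4, hm2, show p % 2 = 1 by omega]
    · have hc : c8 = 1 := by simp [hc8, h]
      rw [ZMod.χ₈_nat_eq_if_mod_eight, ZMod.χ₄_nat_eq_if_mod_four]
      rw [hc] at hp8
      simp [hp8, h, hm2, show p % 2 = 1 by omega]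
  have hne : (((2*m₀ : ℕ) : ℤ) : ZMod p) ≠ 0 := by
    rw [Int.cast_natCast, Ne, ZMod.natCast_eq_zero_iff]
    intro hdvd
    have := Nat.le_of_dvd (by omega) hdvd
    omega
  have hsq := (legendreSym.eq_one_iff p hne).mp hLeg
  rwa [Int.cast_natCast] at hsq

private lemma three_sq (Nn : ℕ) (h4 : Nn % 4 = 2) :
    ∃ A B C : ℤ, A^2 + B^2 + C^2 = (Nn:ℤ) := by
  obtain ⟨n₀, d, hdn, hsf⟩ := Nat.sq_mul_squarefree Nn
  have hN2 : Nn ≥ 2 := by omega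
  have hn0 : n₀ ≠ 0 := by
    rintro rfl
    rw [show d^2*0 = 0 by ring] at hdn
    omega
  have hd0 : d ≠ 0 := by
    rintro rfl
    rw [show (0:ℕ)^2*n₀ = 0 by ring] at hdn
    omega
  have hdodd : d % 2 = 1 := by
    rcases Nat.even_or_odd d with h | h
    · exfalso
      obtain ⟨t, rfl⟩ := h
      rw [show (t+t)^2*n₀ = 4*(t^2*n₀) by ring] at hdn
      omega
    · exact Nat.odd_iff.mp h
  have hn2 : n₀ % 2 = 0 := by
    by_contra hcon
    obtain ⟨a, ha⟩ : ∃ a, d = 2*a+1 := ⟨d/2, by omega⟩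
    obtain ⟨b, hb⟩ : ∃ b, n₀ = 2*b+1 := ⟨n₀/2, by omega⟩
    have : d^2*n₀ = 2*((2*a^2+2*a)*(2*b+1) + b) + 1 := by rw [ha, hb]; ring
    omega
  set m₀ := n₀ / 2 with hm₀
  have hn₀eq : n₀ = 2*m₀ := by omega
  have hm₀odd : m₀ % 2 = 1 := by
    by_contra hcon
    obtain ⟨c, hc⟩ : ∃ c, m₀ = 2*c := ⟨m₀/2, by omega⟩
    have : d^2*n₀ = 4*(d^2*c) := by rw [hn₀eq, hc]; ring
    omega
  obtain ⟨p, hp, hpb, hpgt, hp4, hpm1, hsq⟩ := aux_prime m₀ hm₀odd n₀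
  haveI hpf : Fact p.Prime := ⟨hp⟩
  rw [← hn₀eq] at hsq hpgt
  have hpodd : p % 2 = 1 := by omega
  have hndvd : n₀ ∣ p + 1 := by
    rw [hn₀eq]
    have h2 : 2 ∣ p + 1 := by omega
    have hcop : Nat.Coprime 2 m₀ := Nat.coprime_two_left.mpr (Nat.odd_iff.mpr hm₀odd)
    exact Nat.Coprime.mul_dvd_of_dvd_of_dvd hcop h2 hpm1
  obtain ⟨g0, hg0⟩ := hsq
  have hγ : (p:ℤ) ∣ ((g0.val : ℤ))^2 - (n₀:ℤ) := by
    rw [← ZMod.intCast_zmod_eq_zero_iff_dvd]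
    push_cast
    rw [ZMod.natCast_val, ZMod.cast_id, hg0]
    ring
  obtain ⟨W, Y, Z, hW0, hrep⟩ := lattice_rep n₀ p (g0.val : ℤ) (by omega) hsf hp hpgt hndvd hγ
  obtain ⟨a, b, hab⟩ := Nat.Prime.sq_add_sq (p := p) (by omega)
  have hNd : (Nn:ℤ) = (d:ℤ)^2 * (n₀:ℤ) := by exact_mod_cast hdn.symm
  have hcomb : ((d:ℤ)*Z)^2 + ((d:ℤ)*(a:ℤ)*Y)^2 + ((d:ℤ)*(b:ℤ)*Y)^2 = (Nn:ℤ) * W^2 := by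
    have habZ : ((a:ℤ)^2 + (b:ℤ)^2) = (p:ℤ) := by exact_mod_cast hab
    rw [hNd]
    linear_combination (d:ℤ)^2 * hrep.symm + ((d:ℤ)^2*Y^2) * habZ
  have hWnat : ((W.natAbs : ℕ) : ℤ)^2 = W^2 := by
    rw [Int.natCast_natAbs]; exact sq_abs W
  apply dc_descent (Nn:ℤ) W.natAbs (by positivity)
    ((d:ℤ)*Z) ((d:ℤ)*(a:ℤ)*Y) ((d:ℤ)*(b:ℤ)*Y)
  rw [hWnat]
  exact hcomb


theorem stmt_12 (n : ℕ) (r : ℤ) (hr : r = 6 ∨ r = 14) :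
    ∃ x y z : ℤ, Odd z ∧ 20*(n : ℤ) + r = 5*x^2 + 5*y^2 + z^2 := by
  have main : ∀ Nn : ℕ, Nn % 4 = 2 → (Nn % 5 = 1 ∨ Nn % 5 = 4) →
      ∃ x y z : ℤ, Odd z ∧ (Nn:ℤ) = 5*x^2 + 5*y^2 + z^2 := by
    intro Nn h4 h5
    obtain ⟨A, B, C, hABC⟩ := three_sq Nn h4
    have h4Z : (Nn:ℤ) % 4 = 2 := by omega
    have h5Z : (Nn:ℤ) % 5 = 1 ∨ (Nn:ℤ) % 5 = 4 := by omega
    rcases parity3 h4Z hABC with ⟨hE, h1, h2⟩ | ⟨h1, hE, h2⟩ | ⟨h1, h2, hE⟩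
    · exact finish5 h5Z hE h1 h2 (by linarith)
    · exact finish5 h5Z hE h1 h2 (by linarith)
    · exact finish5 h5Z hE h1 h2 (by linarith)
  rcases hr with rfl | rfl
  · obtain ⟨x, y, z, hz, h⟩ := main (20*n+6) (by omega) (by omega)
    refine ⟨x, y, z, hz, ?_⟩
    push_cast at h
    linarith
  · obtain ⟨x, y, z, hz, h⟩ := main (20*n+14) (by omega) (by omega)
    refine ⟨x, y, z, hz, ?_⟩
    push_cast at h
    linarith
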